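/- Let I ⊆ [0, 1] be a set of real numbers satisfying the descending chain condition and let m be a positive integer. Then there exists a finite subset J ⊆ I such that for every a ∈ I there exists b ∈ J with b ≤ a and a − b < 1/m. -/

import Mathlib

/-- A set `I ⊆ ℝ` satisfies the descending chain condition (DCC) if every non-increasing
sequence of elements of `I` is eventually constant. -/
def SatisfiesDCC (I : Set ℝ) : Prop :=
  ∀ f : ℕ → ℝ, (∀ n, f n ∈ I) → Antitone f → ∃ N, ∀ n ≥ N, f n = f N

/-- Let `I ⊆ [0, 1]` satisfy the DCC and let `m` be a positive integer.  Then there exists a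
finite subset `J ⊆ I` such that every `a ∈ I` admits `b ∈ J` with `b ≤ a` and `a - b < 1/m`. -/
theorem statement4 (I : Set ℝ) (hI : I ⊆ Set.Icc 0 1) (hDCC : SatisfiesDCC I)
    (m : ℕ) (hm : 0 < m) :
    ∃ J : Finset ℝ, ↑J ⊆ I ∧ ∀ a ∈ I, ∃ b ∈ J, b ≤ a ∧ a - b < 1 / (m : ℝ) := by
  classical
  -- `I` is well-founded under `<`
  have hWF : I.IsWF := by
    rw [Set.isWF_iff_no_descending_seq]
    intro f hf hmem
    obtain ⟨N, hN⟩ := hDCC f (fun n => hmem n) hf.antitone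
    have := hN (N + 1) (by omega)
    exact absurd this (ne_of_lt (hf (by omega)))
  set n : ℕ := m + 1 with hn
  have hnpos : (0 : ℝ) < n := by positivity
  -- the pieces
  set T : ℕ → Set ℝ := fun k => I ∩ Set.Icc ((k : ℝ) / n) ((k + 1 : ℝ) / n) with hT
  have hTWF : ∀ k, (T k).IsWF := fun k => hWF.mono Set.inter_subset_left
  set g : ℕ → ℝ := fun k =>
    if h : (T k).Nonempty then (hTWF k).min h else 0 with hg
  refine ⟨Finset.image g ((Finset.range n).filter fun k => (T k).Nonempty), ?_, ?_⟩
  · intro x hx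
    simp only [Finset.coe_image, Set.mem_image, Finset.mem_coe, Finset.mem_filter,
      Finset.mem_range] at hx
    obtain ⟨k, ⟨-, hk⟩, rfl⟩ := hx
    simp only [hg, dif_pos hk]
    exact ((hTWF k).min_mem hk).1
  · intro a ha
    obtain ⟨ha0, ha1⟩ := hI ha
    -- find k < n with k/n ≤ a ≤ (k+1)/n
    obtain ⟨k, hkn, hk1, hk2⟩ : ∃ k : ℕ, k < n ∧ (k : ℝ) / n ≤ a ∧ a ≤ (k + 1 : ℝ) / n := by
      have hfl : (0 : ℤ) ≤ ⌊a * n⌋ := Int.floor_nonneg.2 (by positivity)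
      have hcast : ((⌊a * n⌋.toNat : ℕ) : ℝ) = (⌊a * n⌋ : ℝ) := by
        exact_mod_cast congrArg (fun z : ℤ => (z : ℝ)) (Int.toNat_of_nonneg hfl)
      rcases le_or_gt ⌊a * n⌋.toNat m with h | h
      · refine ⟨⌊a * n⌋.toNat, by omega, ?_, ?_⟩
        · rw [div_le_iff₀ hnpos, hcast]
          exact Int.floor_le _
        · rw [le_div_iff₀ hnpos]
          have := Int.lt_floor_add_one (a * n)
          rw [← hcast] at this
          push_cast at this ⊢
          linarith
      · refine ⟨m, by omega, ?_, ?_⟩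
        · rw [div_le_iff₀ hnpos]
          have h1 : ((m : ℕ) : ℝ) + 1 ≤ (⌊a * n⌋.toNat : ℝ) := by exact_mod_cast h
          have h2 := Int.floor_le (a * n)
          rw [← hcast] at h2
          linarith
        · have : ((m : ℝ) + 1) / n = 1 := by
            rw [hn]; push_cast; rw [div_self]; positivity
          rw [this]; exact ha1
    have hTk : (T k).Nonempty := ⟨a, Set.mem_inter ha (Set.mem_Icc.2 ⟨hk1, hk2⟩)⟩
    refine ⟨g k, ?_, ?_, ?_⟩
    · exact Finset.mem_image_of_mem g (Finset.mem_filter.2 ⟨Finset.mem_range.2 hkn, hTk⟩)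
    · simp only [hg, dif_pos hTk]
      exact (hTWF k).min_le hTk (Set.mem_inter ha (Set.mem_Icc.2 ⟨hk1, hk2⟩))
    · have hb : g k ∈ T k := by simp only [hg, dif_pos hTk]; exact (hTWF k).min_mem hTk
      have hb1 := hb.2.1
      have : a - g k ≤ 1 / n := by
        have : (k + 1 : ℝ) / n - (k : ℝ) / n = 1 / n := by field_simp; ring
        linarith
      have : (1 : ℝ) / n < 1 / m := by
        apply one_div_lt_one_div_of_lt
        · exact_mod_cast hm
        · exact_mod_cast Nat.lt_succ_self m
      linarith
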